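/- Let A be the 4×4 centrosymmetric tridiagonal matrix with diagonal (a,-a,-a,a) (a real), superdiagonal (b₁,b₂,b₃), subdiagonal (b₃,b₂,b₁). Then the eigenvalues of A are b₂/2 ± √(Δ₊) and -b₂/2 ± √(Δ₋), where Δ± = a² + b₁b₃ ∓ a b₂ + b₂²/4; equivalently det(A - λI₄) = ((λ - b₂/2)² - Δ₊)((λ + b₂/2)² - Δ₋). -/

import Mathlib

open Matrix Complex

theorem stmt13 (a : ℝ) (b₁ b₂ b₃ : ℂ)
    (A : Matrix (Fin 4) (Fin 4) ℂ)
    (hA : A = !![(a : ℂ), b₁, 0, 0;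
                 b₃, -(a : ℂ), b₂, 0;
                 0, b₂, -(a : ℂ), b₃;
                 0, 0, b₁, (a : ℂ)])
    (Δp Δm : ℂ)
    (hΔp : Δp = (a : ℂ)^2 + b₁ * b₃ - (a : ℂ) * b₂ + b₂^2 / 4)
    (hΔm : Δm = (a : ℂ)^2 + b₁ * b₃ + (a : ℂ) * b₂ + b₂^2 / 4) :
    ∀ lam : ℂ, (A - lam • (1 : Matrix (Fin 4) (Fin 4) ℂ)).det
      = ((lam - b₂ / 2)^2 - Δp) * ((lam + b₂ / 2)^2 - Δm) := by
  intro lam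
  subst hA hΔp hΔm
  have h1 : (1 : Matrix (Fin 4) (Fin 4) ℂ) = !![1,0,0,0;0,1,0,0;0,0,1,0;0,0,0,1] := by
    ext i j; fin_cases i <;> fin_cases j <;> simp [Matrix.one_apply, vecHead, vecTail]
  rw [h1]
  simp only [Matrix.smul_of, Matrix.smul_cons, smul_eq_mul, Matrix.smul_empty,
    mul_one, mul_zero, Matrix.sub_apply]
  rw [show (!![(a : ℂ), b₁, 0, 0; b₃, -(a : ℂ), b₂, 0; 0, b₂, -(a : ℂ), b₃; 0, 0, b₁, (a : ℂ)]
      - !![lam,0,0,0;0,lam,0,0;0,0,lam,0;0,0,0,lam])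
      = !![(a : ℂ) - lam, b₁, 0, 0; b₃, -(a : ℂ) - lam, b₂, 0; 0, b₂, -(a : ℂ) - lam, b₃; 0, 0, b₁, (a : ℂ) - lam] by
    ext i j; fin_cases i <;> fin_cases j <;> simp [vecHead, vecTail]]
  simp [Matrix.det_succ_row_zero, Fin.sum_univ_succ, Fin.succAbove]
  ring
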